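/- Let M ≥ 2, let X_1, …, X_M and a label type C be finite and nonempty, and let W be a pmf on (X_1 × ⋯ × X_M) × C satisfying conditional independence given the label, with label prior p*_c > 0 for all c and data pmf P(x) := ∑_c W(x, c) strictly positive. Then for all classifiers h = (h^1, …, h^M) with h^m : X_m → Δ_C and all priors p ∈ Δ_C with p_c > 0 for all c, eTCg(h, p) ≤ eTCg(h*, p*), where h*^m(x_m)_c := Pr(Y = c | X_m = x_m) are the Bayesian posterior classifiers and p* is the label prior; that is, the Bayesian posterior classifiers together with the true prior maximize the expected total correlation gain. -/

import Mathlib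

/-- The `m`-th marginal of a nonnegative function `P` on `X_1 × ⋯ × X_M`:
`P_m(x_m) := ∑_{x' : x'_m = x_m} P(x')`. -/
noncomputable def marginal {M : ℕ} {X : Fin M → Type*} [∀ m, Fintype (X m)]
    [∀ m, DecidableEq (X m)] (P : (∀ m, X m) → ℝ) (m : Fin M) (xm : X m) : ℝ :=
  ∑ x' : ∀ m', X m', if x' m = xm then P x' else 0

/-- The label prior `p*_c := ∑_x W(x, c)` of a pmf `W` on `(X_1 × ⋯ × X_M) × C`. -/
noncomputable def labelPrior {M : ℕ} {X : Fin M → Type*} {C : Type*} [∀ m, Fintype (X m)]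
    (W : ((∀ m, X m) × C) → ℝ) (c : C) : ℝ :=
  ∑ x : ∀ m, X m, W (x, c)

/-- The conditional pmf on `X_1 × ⋯ × X_M` given label `c`: `W(x|Y=c) := W(x,c)/p*_c`. -/
noncomputable def condGivenLabel {M : ℕ} {X : Fin M → Type*} {C : Type*} [∀ m, Fintype (X m)]
    (W : ((∀ m, X m) × C) → ℝ) (c : C) (x : ∀ m, X m) : ℝ :=
  W (x, c) / labelPrior W c

/-- `W` satisfies conditional independence given the label: for every `c` with `p*_c > 0`
and every `x`, `W(x|Y=c) = ∏_m Pr(X_m = x_m | Y = c)`. -/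
def CondIndep {M : ℕ} {X : Fin M → Type*} {C : Type*} [∀ m, Fintype (X m)]
    [∀ m, DecidableEq (X m)] (W : ((∀ m, X m) × C) → ℝ) : Prop :=
  ∀ c, 0 < labelPrior W c → ∀ x : ∀ m, X m,
    condGivenLabel W c x = ∏ m, marginal (condGivenLabel W c) m (x m)

/-- The data pmf `P(x) := ∑_c W(x, c)`. -/
noncomputable def dataPmf {M : ℕ} {X : Fin M → Type*} {C : Type*} [Fintype C]
    (W : ((∀ m, X m) × C) → ℝ) (x : ∀ m, X m) : ℝ :=
  ∑ c, W (x, c)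

/-- The posterior of the `m`-th modality:
`Pr(Y = c | X_m = x_m) := (∑_{x' : x'_m = x_m} W(x', c)) / P_m(x_m)`. -/
noncomputable def posterior {M : ℕ} {X : Fin M → Type*} {C : Type*} [∀ m, Fintype (X m)]
    [∀ m, DecidableEq (X m)] [Fintype C]
    (W : ((∀ m, X m) × C) → ℝ) (m : Fin M) (xm : X m) (c : C) : ℝ :=
  (∑ x' : ∀ m', X m', if x' m = xm then W (x', c) else 0) / marginal (dataPmf W) m xm

/-- The aggregated score `S_{h,p}(x) := ∑_c (∏_m h^m(x_m)_c) / (p_c)^{M−1}`. -/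
noncomputable def score {M : ℕ} {X : Fin M → Type*} {C : Type*} [Fintype C]
    (h : ∀ m, X m → C → ℝ) (p : C → ℝ) (x : ∀ m, X m) : ℝ :=
  ∑ c, (∏ m, h m (x m) c) / (p c) ^ (M - 1)

/-- Extended-real logarithm with the convention `log 0 = −∞`. -/
noncomputable def elog (t : ℝ) : EReal := if t = 0 then ⊥ else ((Real.log t : ℝ) : EReal)

/-- The expected total correlation gain
`eTCg(h, p) := 1 + ∑_x P(x)·log S_{h,p}(x) − ∑_x (∏_m P_m(x_m))·S_{h,p}(x)`,
as an extended real, with the convention `log 0 = −∞` (so the middle sum is `−∞` whenever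
`S_{h,p}(x) = 0` for some `x` with `P(x) > 0`, since `0 · (−∞) = 0` in `EReal`). -/
noncomputable def eTCgE {M : ℕ} {X : Fin M → Type*} {C : Type*} [∀ m, Fintype (X m)]
    [∀ m, DecidableEq (X m)] [Fintype C]
    (P : (∀ m, X m) → ℝ) (h : ∀ m, X m → C → ℝ) (p : C → ℝ) : EReal :=
  1 + (∑ x : ∀ m, X m, (P x : EReal) * elog (score h p x)) -
    ((∑ x : ∀ m, X m, (∏ m, marginal P m (x m)) * score h p x : ℝ) : EReal)

/-- under conditional independence given the label (strictly positive prior and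
data pmf), the Bayesian posterior classifiers `h*^m(x_m)_c = Pr(Y=c|X_m=x_m)` together with the
true prior `p*` maximize the expected total correlation gain: for every family of classifiers
`h^m : X_m → Δ_C` and every strictly positive prior `p ∈ Δ_C`,
`eTCg(h, p) ≤ eTCg(h*, p*)`. -/
lemma ereal_coe_sum {ι : Type*} (s : Finset ι) (f : ι → ℝ) :
    ((∑ i ∈ s, f i : ℝ) : EReal) = ∑ i ∈ s, (f i : EReal) := by
  induction s using Finset.cons_induction with
  | empty => simp
  | cons a s ha ih => rw [Finset.sum_cons, Finset.sum_cons, EReal.coe_add, ih]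

lemma ereal_sum_eq_bot {ι : Type*} [Fintype ι] (f : ι → EReal) (i0 : ι) (h : f i0 = ⊥) :
    ∑ i, f i = ⊥ := by
  classical
  rw [← Finset.add_sum_erase _ _ (Finset.mem_univ i0), h, EReal.bot_add]

theorem bayes_posterior_maximizes_eTCg {M : ℕ} (hM : 2 ≤ M)
    (X : Fin M → Type*) [∀ m, Fintype (X m)] [∀ m, Nonempty (X m)] [∀ m, DecidableEq (X m)]
    (C : Type*) [Fintype C] [Nonempty C]
    (W : ((∀ m, X m) × C) → ℝ)
    (hW0 : ∀ z, 0 ≤ W z) (hW1 : ∑ z, W z = 1)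
    (hCI : CondIndep W)
    (hprior : ∀ c, 0 < labelPrior W c)
    (hP : ∀ x : ∀ m, X m, 0 < dataPmf W x) :
    ∀ (h : ∀ m, X m → C → ℝ) (p : C → ℝ),
      (∀ m (xm : X m), (∀ c, 0 ≤ h m xm c) ∧ ∑ c, h m xm c = 1) →
      ((∀ c, 0 < p c) ∧ ∑ c, p c = 1) →
      eTCgE (dataPmf W) h p ≤
        eTCgE (dataPmf W) (fun m xm c => posterior W m xm c) (labelPrior W) := by
  classical
  intro h p hh hp
  -- marginals of the data pmf are positive
  have hmarg : ∀ (m : Fin M) (xm : X m), 0 < marginal (dataPmf W) m xm := by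
    intro m xm
    unfold marginal
    apply Finset.sum_pos'
    · intro x _
      by_cases hx : x m = xm
      · rw [if_pos hx]; exact (hP x).le
      · rw [if_neg hx]
    · refine ⟨Function.update (Classical.arbitrary _) m xm, Finset.mem_univ _, ?_⟩
      rw [if_pos (Function.update_self _ _ _)]
      exact hP _
  set Q : (∀ m, X m) → ℝ := fun x => ∏ m, marginal (dataPmf W) m (x m) with hQdef
  have hQ : ∀ x, 0 < Q x := fun x => Finset.prod_pos (fun m _ => hmarg m (x m))
  have hQx : ∀ x : ∀ m, X m, (∏ m, marginal (dataPmf W) m (x m)) = Q x := fun _ => rfl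
  have hPsum : ∑ x : ∀ m, X m, dataPmf W x = 1 := by
    rw [← hW1, Fintype.sum_prod_type]; rfl
  -- value of the optimal score
  have hscore_star : ∀ x, score (fun m xm c => posterior W m xm c) (labelPrior W) x
      = dataPmf W x / Q x := by
    intro x
    unfold score
    have hterm : ∀ c : C, (∏ m, posterior W m (x m) c) / (labelPrior W c) ^ (M - 1)
        = W (x, c) / Q x := by
      intro c
      have hpc := hprior c
      have hnum : ∀ m : Fin M, (∑ x' : ∀ m', X m', if x' m = x m then W (x', c) else 0)
          = labelPrior W c * marginal (condGivenLabel W c) m (x m) := by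
        intro m
        unfold marginal condGivenLabel
        rw [Finset.mul_sum]
        refine Finset.sum_congr rfl fun x' _ => ?_
        by_cases hx : x' m = x m
        · rw [if_pos hx, if_pos hx]; field_simp
        · rw [if_neg hx, if_neg hx]; ring
      have hprod : ∏ m, posterior W m (x m) c
          = (labelPrior W c) ^ M * condGivenLabel W c x / Q x := by
        unfold posterior
        calc ∏ m, (∑ x' : ∀ m', X m', if x' m = x m then W (x', c) else 0) /
                marginal (dataPmf W) m (x m)
            = ∏ m, (labelPrior W c * marginal (condGivenLabel W c) m (x m)) /
                marginal (dataPmf W) m (x m) :=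
              Finset.prod_congr rfl fun m _ => by rw [hnum m]
          _ = (∏ m : Fin M, labelPrior W c * marginal (condGivenLabel W c) m (x m)) / Q x := by
              rw [Finset.prod_div_distrib]
          _ = ((labelPrior W c) ^ M * ∏ m, marginal (condGivenLabel W c) m (x m)) / Q x := by
              rw [Finset.prod_mul_distrib, Finset.prod_const, Finset.card_univ,
                Fintype.card_fin]
          _ = (labelPrior W c) ^ M * condGivenLabel W c x / Q x := by
              rw [← hCI c hpc x]
      rw [hprod]
      unfold condGivenLabel
      have hpow : (labelPrior W c) ^ M = (labelPrior W c) ^ (M - 1) * labelPrior W c := by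
        rw [← pow_succ]; congr 1; omega
      rw [hpow]
      have hl : labelPrior W c ≠ 0 := (hprior c).ne'
      have hlp : (labelPrior W c) ^ (M - 1) ≠ 0 := pow_ne_zero _ hl
      field_simp
    rw [Finset.sum_congr rfl fun c _ => hterm c, ← Finset.sum_div]
    rfl
  -- the RHS equals the (coerced) total correlation
  have hRHS : eTCgE (dataPmf W) (fun m xm c => posterior W m xm c) (labelPrior W)
      = ((∑ x : ∀ m, X m, dataPmf W x * Real.log (dataPmf W x / Q x) : ℝ) : EReal) := by
    unfold eTCgE
    have h1 : ∑ x : ∀ m, X m, (dataPmf W x : EReal) *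
        elog (score (fun m xm c => posterior W m xm c) (labelPrior W) x)
        = ((∑ x : ∀ m, X m, dataPmf W x * Real.log (dataPmf W x / Q x) : ℝ) : EReal) := by
      rw [ereal_coe_sum]
      refine Finset.sum_congr rfl fun x _ => ?_
      rw [hscore_star x, elog, if_neg (div_pos (hP x) (hQ x)).ne', EReal.coe_mul]
    have h2 : (∑ x : ∀ m, X m, (∏ m, marginal (dataPmf W) m (x m)) *
        score (fun m xm c => posterior W m xm c) (labelPrior W) x : ℝ) = 1 := by
      rw [← hPsum]
      refine Finset.sum_congr rfl fun x _ => ?_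
      rw [hscore_star x, hQx, mul_comm, div_mul_cancel₀ _ (hQ x).ne']
    rw [h1, h2, ← EReal.coe_one, ← EReal.coe_add, ← EReal.coe_sub]
    norm_num
  rw [hRHS]
  have hSnonneg : ∀ x, 0 ≤ score h p x := by
    intro x
    refine Finset.sum_nonneg fun c _ => div_nonneg ?_ (pow_nonneg (hp.1 c).le _)
    exact Finset.prod_nonneg fun m _ => (hh m (x m)).1 c
  by_cases hzero : ∃ x, score h p x = 0
  · obtain ⟨x0, hx0⟩ := hzero
    have hbot : ∑ x : ∀ m, X m, (dataPmf W x : EReal) * elog (score h p x) = ⊥ := by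
      apply ereal_sum_eq_bot _ x0
      rw [hx0, elog, if_pos rfl]
      exact EReal.coe_mul_bot_of_pos (hP x0)
    unfold eTCgE
    rw [hbot, EReal.add_bot, EReal.bot_sub]
    exact bot_le
  · push_neg at hzero
    have hSpos : ∀ x, 0 < score h p x := fun x => (hSnonneg x).lt_of_ne' (hzero x)
    unfold eTCgE
    have h1 : ∑ x : ∀ m, X m, (dataPmf W x : EReal) * elog (score h p x)
        = ((∑ x : ∀ m, X m, dataPmf W x * Real.log (score h p x) : ℝ) : EReal) := by
      rw [ereal_coe_sum]
      refine Finset.sum_congr rfl fun x _ => ?_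
      rw [elog, if_neg (hSpos x).ne', EReal.coe_mul]
    rw [h1, ← EReal.coe_one, ← EReal.coe_add, ← EReal.coe_sub, EReal.coe_le_coe_iff]
    -- real inequality
    have key : ∀ x : ∀ m, X m,
        dataPmf W x * Real.log (score h p x) - Q x * score h p x ≤
        dataPmf W x * Real.log (dataPmf W x / Q x) - dataPmf W x := by
      intro x
      set a := dataPmf W x with ha
      set q := Q x with hq
      set s := score h p x with hs
      have hA : (0:ℝ) < a := hP x
      have hQ' : (0:ℝ) < q := hQ x
      have hS : (0:ℝ) < s := hSpos x
      have hlog := Real.log_le_sub_one_of_pos (show (0:ℝ) < s * q / a by positivity)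
      have hmul := mul_le_mul_of_nonneg_left hlog hA.le
      have hre : a * (s * q / a - 1) = s * q - a := by field_simp
      rw [hre] at hmul
      rw [Real.log_div (mul_pos hS hQ').ne' hA.ne', Real.log_mul hS.ne' hQ'.ne'] at hmul
      rw [Real.log_div hA.ne' hQ'.ne']
      nlinarith [hmul]
    have hsum := Finset.sum_le_sum (s := (Finset.univ : Finset (∀ m, X m))) (fun x _ => key x)
    rw [Finset.sum_sub_distrib, Finset.sum_sub_distrib, hPsum] at hsum
    simp only [hQx]
    linarith [hsum]
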